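/- Let G ≤ PL₊(I) and suppose (A₁,g₁), …, (A_q,g_q) are factor signed orbitals associated to elements of G with A₁ = A₂ = ⋯ = A_q. Then for any integers p₁, …, p_q, every one-bump factor of the element g₁^{p₁} ⋯ g_q^{p_q} is also a one-bump factor of some element of G. -/
import Mathlib


open Set

namespace PLPaper

/-- We model `PL₊(I)` inside the group of bijections of `ℝ` with *opposite*
composition, so that the group acts on `ℝ` on the right:
`x · (g * h) = (x · g) · h`. -/
abbrev PermR : Type := (Equiv.Perm ℝ)ᵐᵒᵖ

/-- The (right) action of `g` on the point `x`. -/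
def ap (g : PermR) (x : ℝ) : ℝ := g.unop x

/-- `g` is affine on a neighbourhood of `x`. -/
def IsLocallyAffineAt (g : PermR) (x : ℝ) : Prop :=
  ∃ m b : ℝ, ∀ᶠ y in nhds x, ap g y = m * y + b

/-- The breakpoints of `g`: points of `(0,1)` where `g` is not locally affine
(equivalently, for a PL map, where the derivative fails to exist). -/
def Breakpoints (g : PermR) : Set ℝ :=
  {x ∈ Ioo (0:ℝ) 1 | ¬ IsLocallyAffineAt g x}

/-- `g` is an orientation-preserving piecewise-linear homeomorphism of `[0,1]`
(extended by the identity to all of `ℝ`), with finitely many breakpoints. -/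
def IsPL (g : PermR) : Prop :=
  StrictMono (ap g) ∧ (∀ x ∉ Ioo (0:ℝ) 1, ap g x = x) ∧ (Breakpoints g).Finite

/-- The support of `g`. -/
def Supp (g : PermR) : Set ℝ := {x | ap g x ≠ x}

/-- `(a,b)` is an orbital of `g`, i.e. a connected component of `Supp g`. -/
def IsOrbital (g : PermR) (a b : ℝ) : Prop :=
  a < b ∧ Ioo a b ⊆ Supp g ∧ a ∉ Supp g ∧ b ∉ Supp g

/-- The support of a subgroup `G`. -/
def GSupp (G : Subgroup PermR) : Set ℝ := ⋃ g ∈ (G : Set PermR), Supp g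

/-- `(a,b)` is an orbital of the group `G`, i.e. a connected component of its support. -/
def IsGroupOrbital (G : Subgroup PermR) (a b : ℝ) : Prop :=
  a < b ∧ Ioo a b ⊆ GSupp G ∧ a ∉ GSupp G ∧ b ∉ GSupp G

/-- The pair `g, h` carries a transition chain: orbitals `(a,b)` of `g` and
`(c,d)` of `h` with `a < c < b < d`. -/
def ElemsTransitionChain (g h : PermR) : Prop :=
  ∃ a b c d : ℝ, IsOrbital g a b ∧ IsOrbital h c d ∧ a < c ∧ c < b ∧ b < d

/-- The pair `g, h` carries a one-sided overlap: orbitals `(a,b)` of `g` and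
`(a,c)` of `h`, or `(a,b)` of `g` and `(c,b)` of `h`, where `a < c < b`. -/
def ElemsOneSidedOverlap (g h : PermR) : Prop :=
  ∃ a b c : ℝ, a < c ∧ c < b ∧
    ((IsOrbital g a b ∧ IsOrbital h a c) ∨ (IsOrbital g a b ∧ IsOrbital h c b))

def AdmitsTransitionChain (G : Subgroup PermR) : Prop :=
  ∃ g ∈ G, ∃ h ∈ G, ElemsTransitionChain g h

def AdmitsOneSidedOverlap (G : Subgroup PermR) : Prop :=
  ∃ g ∈ G, ∃ h ∈ G, ElemsOneSidedOverlap g h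

/-- `G` admits a bad overlap: orbitals `A` of `f ∈ G` and `B` of `g ∈ G` which
intersect, are distinct, and neither closure is contained in the other orbital. -/
def AdmitsBadOverlap (G : Subgroup PermR) : Prop :=
  ∃ f ∈ G, ∃ g ∈ G, ∃ a b c d : ℝ, IsOrbital f a b ∧ IsOrbital g c d ∧
    (Ioo a b ∩ Ioo c d).Nonempty ∧ Ioo a b ≠ Ioo c d ∧
    ¬ Icc a b ⊆ Ioo c d ∧ ¬ Icc c d ⊆ Ioo a b

/-- A tower: a set of signed orbitals `((a,b), g)` with pairwise nested orbitals,
where equal orbitals force equal signatures. -/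
def IsTower (T : Set ((ℝ × ℝ) × PermR)) : Prop :=
  (∀ p ∈ T, IsOrbital p.2 p.1.1 p.1.2) ∧
  (∀ p ∈ T, ∀ q ∈ T,
      Ioo p.1.1 p.1.2 ⊆ Ioo q.1.1 q.1.2 ∨ Ioo q.1.1 q.1.2 ⊆ Ioo p.1.1 p.1.2) ∧
  (∀ p ∈ T, ∀ q ∈ T, p.1 = q.1 → p.2 = q.2)

/-- `G` admits the tower `T` if `T` is a tower all of whose signatures lie in `G`. -/
def AdmitsTower (G : Subgroup PermR) (T : Set ((ℝ × ℝ) × PermR)) : Prop :=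
  IsTower T ∧ ∀ p ∈ T, p.2 ∈ G

def AdmitsInfiniteTower (G : Subgroup PermR) : Prop :=
  ∃ T : Set ((ℝ × ℝ) × PermR), AdmitsTower G T ∧ T.Infinite

/-- The set of breakpoints of the elements of a set `S`. -/
def BreakSet (S : Set PermR) : Set ℝ := ⋃ g ∈ S, Breakpoints g

/-- The derived length of a group: the least `n` with `derivedSeries G n = ⊥`. -/
noncomputable def derivedLength (G : Type*) [Group G] : ℕ :=
  sInf {n : ℕ | derivedSeries G n = ⊥}

/-- `g` is the one-bump factor of `f` over the orbital `(a,b)` of `f`: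
`g` agrees with `f` on `(a,b)` and is the identity elsewhere. -/
def IsOneBumpFactor (g f : PermR) (a b : ℝ) : Prop :=
  IsOrbital f a b ∧ (∀ x ∈ Ioo a b, ap g x = ap f x) ∧ (∀ x ∉ Ioo a b, ap g x = x)

/-- `g` is a one-bump factor of `f`. -/
def IsFactorOf (g f : PermR) : Prop := ∃ a b : ℝ, IsOneBumpFactor g f a b

/-- `((a,b), g)` is a factor signed orbital associated to (an element of) `G`. -/
def AssociatedFactor (G : Subgroup PermR) (a b : ℝ) (g : PermR) : Prop :=
  ∃ f ∈ G, IsOneBumpFactor g f a b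

/-- The split group `S(G)`: the subgroup generated by the one-bump factors of
all elements of `G`. -/
def SplitGroup (G : Subgroup PermR) : Subgroup PermR :=
  Subgroup.closure {g : PermR | ∃ f ∈ G, IsFactorOf g f}

lemma ap_mul (x y : PermR) (t : ℝ) : ap (x * y) t = ap y (ap x t) := by
  simp [ap, MulOpposite.unop_mul, Equiv.Perm.mul_apply]

lemma ap_one (t : ℝ) : ap (1 : PermR) t = t := rfl

lemma ap_zpow (z : PermR) (n : ℤ) (t : ℝ) : ap (z ^ n) t = (z.unop ^ n) t := by
  simp [ap, MulOpposite.unop_zpow]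

/-- Powers preserve agreement on an invariant set (natural powers). -/
lemma pow_agree (S : Set ℝ) (σ τ : Equiv.Perm ℝ)
    (hσ : ∀ x ∈ S, σ x ∈ S) (hag : ∀ x ∈ S, σ x = τ x) (n : ℕ) :
    ∀ x ∈ S, (σ ^ n) x = (τ ^ n) x ∧ (σ ^ n) x ∈ S := by
  induction n with
  | zero => intro x hx; simp [hx]
  | succ m ih =>
    intro x hx
    have h1 : σ x ∈ S := hσ x hx
    obtain ⟨he, hm⟩ := ih (σ x) h1
    rw [pow_succ, pow_succ]
    constructor
    · simp only [Equiv.Perm.mul_apply]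
      rw [← hag x hx]; exact he
    · simp only [Equiv.Perm.mul_apply]; exact hm

/-- Powers preserve agreement on an invariant set (integer powers). -/
lemma zpow_agree (S : Set ℝ) (σ τ : Equiv.Perm ℝ)
    (hσ : ∀ x ∈ S, σ x ∈ S) (hσ' : ∀ x ∈ S, σ⁻¹ x ∈ S)
    (_hτ' : ∀ x ∈ S, τ⁻¹ x ∈ S)
    (hag : ∀ x ∈ S, σ x = τ x) (n : ℤ) :
    ∀ x ∈ S, (σ ^ n) x = (τ ^ n) x ∧ (σ ^ n) x ∈ S := by
  have hinvag : ∀ x ∈ S, σ⁻¹ x = τ⁻¹ x := by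
    intro x hx
    have hy : σ⁻¹ x ∈ S := hσ' x hx
    have : τ (σ⁻¹ x) = x := by rw [← hag _ hy]; simp
    calc σ⁻¹ x = τ⁻¹ (τ (σ⁻¹ x)) := by simp
    _ = τ⁻¹ x := by rw [this]
  cases n with
  | ofNat m =>
    intro x hx
    simpa using pow_agree S σ τ hσ hag m x hx
  | negSucc m =>
    intro x hx
    have := pow_agree S σ⁻¹ τ⁻¹ hσ' hinvag (m + 1) x hx
    simpa [zpow_negSucc, inv_pow] using this

/-- Agreement (and invariance) passes to products of lists given by `ofFn`. -/
lemma ofFn_prod_agree (S : Set ℝ) :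
    ∀ (q : ℕ) (F H : Fin q → PermR),
    (∀ i, ∀ x ∈ S, ap (F i) x = ap (H i) x ∧ ap (F i) x ∈ S) →
    ∀ x ∈ S, ap (List.ofFn F).prod x = ap (List.ofFn H).prod x ∧
      ap (List.ofFn F).prod x ∈ S := by
  intro q
  induction q with
  | zero => intro F H _ x hx; simp [ap_one, hx]
  | succ m ih =>
    intro F H h x hx
    obtain ⟨he, hm⟩ := h 0 x hx
    rw [List.ofFn_succ, List.ofFn_succ, List.prod_cons, List.prod_cons,
      ap_mul, ap_mul, he]
    have hm' : ap (H 0) x ∈ S := he ▸ hm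
    exact ih (fun i => F i.succ) (fun i => H i.succ) (fun i => h i.succ)
      (ap (H 0) x) hm'

lemma zpow_fixed (σ : Equiv.Perm ℝ) (x : ℝ) (h : σ x = x) (n : ℤ) :
    (σ ^ n) x = x := by
  have hnat : ∀ m : ℕ, (σ ^ m) x = x := by
    intro m
    induction m with
    | zero => simp
    | succ k ih => rw [pow_succ', Equiv.Perm.mul_apply, ih, h]
  have hinv : σ⁻¹ x = x := by
    conv_lhs => rw [← h]
    simp
  cases n with
  | ofNat m => simpa using hnat m
  | negSucc m =>
    rw [zpow_negSucc, ← inv_pow]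
    have : ∀ k : ℕ, (σ⁻¹ ^ k) x = x := by
      intro k
      induction k with
      | zero => simp
      | succ j ih => rw [pow_succ', Equiv.Perm.mul_apply, ih, hinv]
    exact this (m + 1)

lemma ofFn_prod_fixed :
    ∀ (q : ℕ) (F : Fin q → PermR) (x : ℝ),
    (∀ i, ap (F i) x = x) → ap (List.ofFn F).prod x = x := by
  intro q
  induction q with
  | zero => intro F x _; simp [ap_one]
  | succ m ih =>
    intro F x h
    rw [List.ofFn_succ, List.prod_cons, ap_mul, h 0]
    exact ih (fun i => F i.succ) x (fun i => h i.succ)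

theorem statement10 (G : Subgroup PermR) (hPL : ∀ g ∈ G, IsPL g)
    (q : ℕ) (a b : ℝ) (g : Fin q → PermR)
    (hg : ∀ i, AssociatedFactor G a b (g i)) (p : Fin q → ℤ) :
    ∀ c : PermR, IsFactorOf c ((List.ofFn fun i => g i ^ p i).prod) →
      ∃ f ∈ G, IsFactorOf c f := by
  classical
  choose fhat hfG hfb using hg
  set S : Set ℝ := Ioo a b with hS
  -- basic facts about each fhat i and g i
  have hfix_a : ∀ i, ap (fhat i) a = a := fun i => by
    have := (hfb i).1.2.2.1
    simpa [Supp] using this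
  have hfix_b : ∀ i, ap (fhat i) b = b := fun i => by
    have := (hfb i).1.2.2.2
    simpa [Supp] using this
  have hmono : ∀ i, StrictMono (ap (fhat i)) := fun i => (hPL _ (hfG i)).1
  have hmapsto : ∀ i, ∀ x ∈ S, ap (fhat i) x ∈ S := by
    intro i x hx
    exact ⟨by rw [← hfix_a i]; exact hmono i hx.1,
           by rw [← hfix_b i]; exact hmono i hx.2⟩
  have hmapsto' : ∀ i, ∀ x ∈ S, (fhat i).unop⁻¹ x ∈ S := by
    intro i x hx
    set y := (fhat i).unop⁻¹ x with hy
    have hyx : ap (fhat i) y = x := by simp [ap, hy]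
    constructor
    · by_contra hcon
      push_neg at hcon
      have : ap (fhat i) y ≤ ap (fhat i) a := (hmono i).monotone hcon
      rw [hyx, hfix_a i] at this
      exact absurd hx.1 (not_lt.mpr this)
    · by_contra hcon
      push_neg at hcon
      have : ap (fhat i) b ≤ ap (fhat i) y := (hmono i).monotone hcon
      rw [hyx, hfix_b i] at this
      exact absurd hx.2 (not_lt.mpr this)
  have hgid : ∀ i, ∀ x ∉ S, ap (g i) x = x := fun i => (hfb i).2.2
  have hgmapsto' : ∀ i, ∀ x ∈ S, (g i).unop⁻¹ x ∈ S := by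
    intro i x hx
    set y := (g i).unop⁻¹ x with hy
    have hyx : ap (g i) y = x := by simp [ap, hy]
    by_contra hcon
    have := hgid i y hcon
    rw [hyx] at this
    exact hcon (this ▸ hx)
  have hag : ∀ i, ∀ x ∈ S, (fhat i).unop x = (g i).unop x := by
    intro i x hx
    exact ((hfb i).2.1 x hx).symm
  -- agreement of the zpow factors
  have hfac : ∀ i, ∀ x ∈ S,
      ap (fhat i ^ p i) x = ap (g i ^ p i) x ∧ ap (fhat i ^ p i) x ∈ S := by
    intro i x hx
    have := zpow_agree S (fhat i).unop (g i).unop (hmapsto i) (hmapsto' i)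
      (hgmapsto' i) (hag i) (p i) x hx
    rw [ap_zpow, ap_zpow]
    exact this
  set f : PermR := (List.ofFn fun i => fhat i ^ p i).prod with hf
  set h : PermR := (List.ofFn fun i => g i ^ p i).prod with hh
  have hfG' : f ∈ G := by
    apply list_prod_mem
    intro z hz
    rw [List.mem_ofFn] at hz
    obtain ⟨i, rfl⟩ := hz
    exact zpow_mem (hfG i) (p i)
  have hagree : ∀ x ∈ S, ap f x = ap h x ∧ ap f x ∈ S :=
    ofFn_prod_agree S q (fun i => fhat i ^ p i) (fun i => g i ^ p i) hfac
  have hfa : ap f a = a :=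
    ofFn_prod_fixed q _ a (fun i => by
      rw [ap_zpow]; exact zpow_fixed _ _ (hfix_a i) (p i))
  have hfb' : ap f b = b :=
    ofFn_prod_fixed q _ b (fun i => by
      rw [ap_zpow]; exact zpow_fixed _ _ (hfix_b i) (p i))
  have hhid : ∀ x ∉ S, ap h x = x := by
    intro x hx
    exact ofFn_prod_fixed q _ x (fun i => by
      rw [ap_zpow]; exact zpow_fixed _ _ (hgid i x hx) (p i))
  -- now take a factor c of h
  rintro c ⟨a', b', ⟨ha'b', hsupp, hna', hnb'⟩, hcag, hcid⟩
  refine ⟨f, hfG', a', b', ?_, ?_, hcid⟩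
  · -- subset facts
    have hsub : Ioo a' b' ⊆ S := by
      intro x hx
      by_contra hcon
      exact (hsupp hx) (hhid x hcon)
    obtain ⟨hle1, hle2⟩ := (Ioo_subset_Ioo_iff ha'b').mp hsub
    refine ⟨ha'b', ?_, ?_, ?_⟩
    · intro x hx
      have hxS : x ∈ S := hsub hx
      have := (hagree x hxS).1
      simp only [Supp, mem_setOf_eq]
      rw [this]
      exact hsupp hx
    · rcases eq_or_lt_of_le hle1 with heq | hlt
      · simp only [Supp, mem_setOf_eq, not_not]
        rw [← heq]; exact hfa
      · have ha'S : a' ∈ S := ⟨hlt, lt_of_lt_of_le ha'b' hle2⟩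
        simp only [Supp, mem_setOf_eq, not_not]
        rw [(hagree a' ha'S).1]
        simpa [Supp, not_not] using hna'
    · rcases eq_or_lt_of_le hle2 with heq | hlt
      · simp only [Supp, mem_setOf_eq, not_not]
        rw [heq]; exact hfb'
      · have hb'S : b' ∈ S := ⟨lt_of_le_of_lt hle1 ha'b', hlt⟩
        simp only [Supp, mem_setOf_eq, not_not]
        rw [(hagree b' hb'S).1]
        simpa [Supp, not_not] using hnb'
  · intro x hx
    have hsub : Ioo a' b' ⊆ S := by
      intro y hy
      by_contra hcon
      exact (hsupp hy) (hhid y hcon)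
    rw [hcag x hx, (hagree x (hsub hx)).1]

end PLPaper
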